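/- For a unit vector c ∈ ℂ^d and |φ⟩ = Σ_l c_l |Ψ_{0l}⟩, the twirl T(|φ⟩⟨φ|) over the group G = {U_{k,l} ⊗ U_{k,-l}} equals ρ_λ = Σ_l λ_l |Ψ_{0l}⟩⟨Ψ_{0l}| with λ_l = |c_l|². -/

import Mathlib

open scoped BigOperators Classical ComplexOrder

/-- The primitive `d`-th root of unity `η = e^{2πi/d}`. -/
noncomputable def eta (d : ℕ) : ℂ := Complex.exp (2 * (Real.pi : ℂ) * Complex.I / d)

/-- The unitaries `U_{kl} = Σ_r η^{rl} |k+r⟩⟨r|` (index addition mod `d`). -/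
noncomputable def Umat (d : ℕ) [NeZero d] (k l : Fin d) : Matrix (Fin d) (Fin d) ℂ :=
  fun i r => if i = k + r then eta d ^ ((r : ℕ) * (l : ℕ)) else 0

/-- The maximally entangled vectors `Ψ_{kl} = (1/√d) Σ_j |j⟩ ⊗ U_{kl}|j⟩`,
as functions on `Fin d × Fin d` (component at `(a,b)` is `(1/√d)·(U_{kl})_{b a}`). -/
noncomputable def Psi (d : ℕ) [NeZero d] (k l : Fin d) : Fin d × Fin d → ℂ :=
  fun p => (1 / (Real.sqrt d : ℂ)) * Umat d k l p.2 p.1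

/-- Rank-one projector `|v⟩⟨v|`. -/
noncomputable def outer {ι : Type*} (v : ι → ℂ) : Matrix ι ι ℂ :=
  fun i j => v i * (starRingEnd ℂ) (v j)

/-- The symmetry group element `U_{k,l} ⊗ U_{k,-l}` on `ℂ^d ⊗ ℂ^d`. -/
noncomputable def Gmat (d : ℕ) [NeZero d] (k l : Fin d) :
    Matrix (Fin d × Fin d) (Fin d × Fin d) ℂ :=
  fun p q => Umat d k l p.1 q.1 * Umat d k (-l) p.2 q.2

/-- The twirl `T(ρ) = d⁻² Σ_{g∈G} g* ρ g`. -/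
noncomputable def twirl (d : ℕ) [NeZero d]
    (ρ : Matrix (Fin d × Fin d) (Fin d × Fin d) ℂ) :
    Matrix (Fin d × Fin d) (Fin d × Fin d) ℂ :=
  (((d : ℂ)) ^ 2)⁻¹ • ∑ k, ∑ l, (Gmat d k l).conjTranspose * ρ * Gmat d k l

/-- Expectation value `⟨v|ρ|v⟩`. -/
noncomputable def expec {ι : Type*} [Fintype ι] (v : ι → ℂ)
    (ρ : Matrix ι ι ℂ) : ℂ :=
  ∑ p, ∑ q, (starRingEnd ℂ) (v p) * ρ p q * v q

/-- The state `ρ_λ = Σ_l λ_l |Ψ_{0l}⟩⟨Ψ_{0l}|`. -/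
noncomputable def rhoLam (d : ℕ) [NeZero d] (lam : Fin d → ℝ) :
    Matrix (Fin d × Fin d) (Fin d × Fin d) ℂ :=
  ∑ l, ((lam l : ℝ) : ℂ) • outer (Psi d 0 l)

section aux
variable (d : ℕ) [NeZero d]

lemma eta_prim : IsPrimitiveRoot (eta d) d :=
  Complex.isPrimitiveRoot_exp d (NeZero.ne d)

lemma eta_pow_d : eta d ^ d = 1 := (eta_prim d).pow_eq_one

omit [NeZero d] in
lemma eta_ne_zero : eta d ≠ 0 := Complex.exp_ne_zero _

omit [NeZero d] in
lemma eta_conj : (starRingEnd ℂ) (eta d) = (eta d)⁻¹ := by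
  rw [eta, ← Complex.exp_conj, ← Complex.exp_neg]
  congr 1
  simp [map_div₀, Complex.conj_I, map_ofNat]
  ring

omit [NeZero d] in
lemma sum_pow_fin (z : ℂ) (hz : z ^ d = 1) :
    ∑ k : Fin d, z ^ (k : ℕ) = if z = 1 then (d : ℂ) else 0 := by
  rw [Fin.sum_univ_eq_sum_range]
  split_ifs with h
  · simp [h]
  · rw [geom_sum_eq h, hz]; simp

lemma eta_pow_mod (n : ℕ) : eta d ^ n = eta d ^ (n % d) :=
  pow_eq_pow_mod n (eta_pow_d d)

lemma eta_add_val (x y : Fin d) (a : ℕ) :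
    eta d ^ (((x + y : Fin d) : ℕ) * a) = eta d ^ ((x : ℕ) * a) * eta d ^ ((y : ℕ) * a) := by
  rw [← pow_add, eta_pow_mod, eta_pow_mod d ((x : ℕ) * a + (y : ℕ) * a)]
  congr 1
  have h : ((x + y : Fin d) : ℕ) = ((x : ℕ) + (y : ℕ)) % d := Fin.val_add x y
  rw [h]
  have h2 := (Nat.mod_modEq ((x : ℕ) + (y : ℕ)) d).mul_right a
  unfold Nat.ModEq at h2
  rw [h2, Nat.add_mul]

lemma eta_add_val' (x y : Fin d) (a : ℕ) :
    eta d ^ (a * ((x + y : Fin d) : ℕ)) = eta d ^ (a * (x : ℕ)) * eta d ^ (a * (y : ℕ)) := by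
  rw [mul_comm a, mul_comm a, mul_comm a]; exact eta_add_val d x y a

lemma orth (l l' : Fin d) :
    ∑ k : Fin d, eta d ^ ((k : ℕ) * (l : ℕ)) * (starRingEnd ℂ) (eta d ^ ((k : ℕ) * (l' : ℕ))) =
      if l = l' then (d : ℂ) else 0 := by
  have hne : eta d ≠ 0 := eta_ne_zero d
  set u : ℂ := eta d ^ (l : ℕ) * (eta d ^ (l' : ℕ))⁻¹ with hu
  have hterm : ∀ k : Fin d,
      eta d ^ ((k : ℕ) * (l : ℕ)) * (starRingEnd ℂ) (eta d ^ ((k : ℕ) * (l' : ℕ))) = u ^ (k : ℕ) := by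
    intro k
    rw [map_pow, eta_conj, hu, mul_pow, ← pow_mul, ← inv_pow, ← pow_mul]
    ring_nf
  have hud : u ^ d = 1 := by
    rw [hu, mul_pow, inv_pow, ← pow_mul, ← pow_mul, mul_comm (l : ℕ) d, mul_comm (l' : ℕ) d,
      pow_mul, pow_mul, eta_pow_d]
    simp
  have hu1 : u = 1 ↔ l = l' := by
    rw [hu, mul_inv_eq_one₀ (pow_ne_zero _ hne)]
    constructor
    · intro h
      exact Fin.ext ((eta_prim d).pow_inj l.isLt l'.isLt h)
    · rintro rfl; rfl
  simp_rw [hterm]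
  rw [sum_pow_fin d u hud]
  simp [hu1]

/-- `f a = Σ_l c_l η^{a l}`. -/
noncomputable def fvec (c : Fin d → ℂ) (a : Fin d) : ℂ :=
  ∑ l, c l * eta d ^ ((a : ℕ) * (l : ℕ))

lemma phi_eq (c : Fin d → ℂ) :
    (fun p : Fin d × Fin d => ∑ l, c l * Psi d 0 l p)
      = fun p => if p.2 = p.1 then (1 / (Real.sqrt d : ℂ)) * fvec d c p.1 else 0 := by
  funext p
  by_cases h : p.2 = p.1
  · simp only [Psi, Umat, zero_add, h, if_pos rfl, fvec, Finset.mul_sum]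
    exact Finset.sum_congr rfl fun l _ => by rw [if_pos trivial]; ring
  · simp [Psi, Umat, zero_add, h]

omit [NeZero d] in
lemma outer_conj {ι : Type*} [Fintype ι] (G : Matrix ι ι ℂ) (v : ι → ℂ) :
    G.conjTranspose * outer v * G
      = outer (fun p => ∑ p', (starRingEnd ℂ) (G p' p) * v p') := by
  ext p q
  simp only [Matrix.mul_apply, Matrix.conjTranspose_apply, outer, map_sum, map_mul,
    Complex.conj_conj, Finset.sum_mul, Finset.mul_sum, RCLike.star_def]
  exact Finset.sum_congr rfl fun a _ => Finset.sum_congr rfl fun b _ => by ring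

lemma Gv (c : Fin d → ℂ) (k m : Fin d) :
    (fun p : Fin d × Fin d => ∑ p', (starRingEnd ℂ) (Gmat d k m p' p)
        * (if p'.2 = p'.1 then (1 / (Real.sqrt d : ℂ)) * fvec d c p'.1 else 0))
      = fun p => if p.2 = p.1 then (1 / (Real.sqrt d : ℂ)) * fvec d c (k + p.1) else 0 := by
  funext p
  simp only [Gmat, Umat, map_mul, apply_ite (starRingEnd ℂ), map_zero, Fintype.sum_prod_type,
    ite_mul, mul_ite, zero_mul, mul_zero, Finset.sum_ite_eq', Finset.mem_univ, if_true]
  by_cases h : p.2 = p.1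
  · rw [h, if_pos rfl, if_pos rfl]
    have hone : (starRingEnd ℂ) (eta d ^ ((p.1 : ℕ) * (m : ℕ)))
        * (starRingEnd ℂ) (eta d ^ ((p.1 : ℕ) * ((-m : Fin d) : ℕ))) = 1 := by
      rw [← map_mul, ← eta_add_val' d m (-m) (p.1 : ℕ)]
      simp
    rw [hone, one_mul]
  · rw [if_neg (fun hh => h (add_left_cancel hh)), if_neg h]

lemma key (c : Fin d → ℂ) (a a' : Fin d) :
    ∑ k : Fin d, fvec d c (k + a) * (starRingEnd ℂ) (fvec d c (k + a')) =
      (d : ℂ) * ∑ l, ((‖c l‖ ^ 2 : ℝ) : ℂ) *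
        (eta d ^ ((a : ℕ) * (l : ℕ)) * (starRingEnd ℂ) (eta d ^ ((a' : ℕ) * (l : ℕ)))) := by
  have expand : ∀ k : Fin d, fvec d c (k + a) * (starRingEnd ℂ) (fvec d c (k + a')) =
      ∑ l, ∑ l', (c l * (starRingEnd ℂ) (c l')
          * (eta d ^ ((a : ℕ) * (l : ℕ)) * (starRingEnd ℂ) (eta d ^ ((a' : ℕ) * (l' : ℕ)))))
        * (eta d ^ ((k : ℕ) * (l : ℕ)) * (starRingEnd ℂ) (eta d ^ ((k : ℕ) * (l' : ℕ)))) := by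
    intro k
    rw [fvec, fvec, map_sum, Finset.sum_mul_sum]
    refine Finset.sum_congr rfl fun l _ => Finset.sum_congr rfl fun l' _ => ?_
    rw [eta_add_val d k a (l : ℕ), eta_add_val d k a' (l' : ℕ), map_mul, map_mul]
    ring
  calc ∑ k : Fin d, fvec d c (k + a) * (starRingEnd ℂ) (fvec d c (k + a'))
      = ∑ l, ∑ l', (c l * (starRingEnd ℂ) (c l')
          * (eta d ^ ((a : ℕ) * (l : ℕ)) * (starRingEnd ℂ) (eta d ^ ((a' : ℕ) * (l' : ℕ)))))
        * ∑ k : Fin d, eta d ^ ((k : ℕ) * (l : ℕ)) * (starRingEnd ℂ) (eta d ^ ((k : ℕ) * (l' : ℕ))) := by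
        simp_rw [expand]
        rw [Finset.sum_comm]
        refine Finset.sum_congr rfl fun l _ => ?_
        rw [Finset.sum_comm]
        exact Finset.sum_congr rfl fun l' _ => (Finset.mul_sum _ _ _).symm
    _ = ∑ l, (c l * (starRingEnd ℂ) (c l)
          * (eta d ^ ((a : ℕ) * (l : ℕ)) * (starRingEnd ℂ) (eta d ^ ((a' : ℕ) * (l : ℕ))))) * (d : ℂ) := by
        refine Finset.sum_congr rfl fun l _ => ?_
        rw [Finset.sum_eq_single_of_mem l (Finset.mem_univ l)
          (fun l' _ hl' => by rw [orth, if_neg (fun hh => hl' hh.symm), mul_zero]), orth,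
          if_pos rfl]
    _ = (d : ℂ) * ∑ l, ((‖c l‖ ^ 2 : ℝ) : ℂ) *
          (eta d ^ ((a : ℕ) * (l : ℕ)) * (starRingEnd ℂ) (eta d ^ ((a' : ℕ) * (l : ℕ)))) := by
        rw [Finset.mul_sum]
        refine Finset.sum_congr rfl fun l _ => ?_
        have hcl : c l * (starRingEnd ℂ) (c l) = ((‖c l‖ ^ 2 : ℝ) : ℂ) := by
          rw [Complex.mul_conj, Complex.normSq_eq_norm_sq]
        rw [hcl]; ring

end aux

theorem twirl_of_Psi_superposition (d : ℕ) [NeZero d] (c : Fin d → ℂ)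
    (hc : ∑ l, ‖c l‖ ^ 2 = 1) :
    twirl d (outer (fun p => ∑ l, c l * Psi d 0 l p)) =
      rhoLam d (fun l => ‖c l‖ ^ 2) := by
  have hdne : (d : ℂ) ≠ 0 := Nat.cast_ne_zero.mpr (NeZero.ne d)
  have hsq : ((Real.sqrt d : ℝ) : ℂ) * ((Real.sqrt d : ℝ) : ℂ) = (d : ℂ) := by
    rw [← Complex.ofReal_mul, Real.mul_self_sqrt (Nat.cast_nonneg d)]
    norm_cast
  have hsne : ((Real.sqrt d : ℝ) : ℂ) ≠ 0 := by
    intro h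
    apply hdne
    rw [← hsq, h, mul_zero]
  rw [twirl, phi_eq]
  have hG : ∀ k m : Fin d, (Gmat d k m).conjTranspose *
      outer (fun p => if p.2 = p.1 then (1 / (Real.sqrt d : ℂ)) * fvec d c p.1 else 0)
        * Gmat d k m
      = outer (fun p => if p.2 = p.1 then (1 / (Real.sqrt d : ℂ)) * fvec d c (k + p.1) else 0) := by
    intro k m
    rw [outer_conj]
    exact congrArg outer (Gv d c k m)
  simp_rw [hG]
  simp only [Finset.sum_const, Finset.card_univ, Fintype.card_fin,
    ← Nat.cast_smul_eq_nsmul (R := ℂ)]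
  ext p q
  simp only [rhoLam, Matrix.smul_apply, Matrix.sum_apply, smul_eq_mul,
    outer, Psi, Umat, zero_add]
  by_cases hp : p.2 = p.1
  · by_cases hq : q.2 = q.1
    · simp only [hp, hq, eq_self_iff_true, if_true, map_mul, map_div₀, map_one,
        Complex.conj_ofReal]
      have hL : ∑ x : Fin d, (d : ℂ) * (1 / ((Real.sqrt d : ℝ) : ℂ) * fvec d c (x + p.1)
            * (1 / ((Real.sqrt d : ℝ) : ℂ) * (starRingEnd ℂ) (fvec d c (x + q.1))))
          = (d : ℂ) * (1 / (((Real.sqrt d : ℝ) : ℂ) * ((Real.sqrt d : ℝ) : ℂ)))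
            * ∑ x : Fin d, fvec d c (x + p.1) * (starRingEnd ℂ) (fvec d c (x + q.1)) := by
        rw [Finset.mul_sum]
        exact Finset.sum_congr rfl fun x _ => by ring
      have hR : ∑ x : Fin d, ((‖c x‖ ^ 2 : ℝ) : ℂ) * (1 / ((Real.sqrt d : ℝ) : ℂ)
              * eta d ^ ((p.1 : ℕ) * (x : ℕ))
            * (1 / ((Real.sqrt d : ℝ) : ℂ) * (starRingEnd ℂ) (eta d ^ ((q.1 : ℕ) * (x : ℕ)))))
          = (1 / (((Real.sqrt d : ℝ) : ℂ) * ((Real.sqrt d : ℝ) : ℂ)))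
            * ∑ x : Fin d, ((‖c x‖ ^ 2 : ℝ) : ℂ)
              * (eta d ^ ((p.1 : ℕ) * (x : ℕ)) * (starRingEnd ℂ) (eta d ^ ((q.1 : ℕ) * (x : ℕ)))) := by
        rw [Finset.mul_sum]
        exact Finset.sum_congr rfl fun x _ => by ring
      rw [hL, key, hR, hsq]
      set S := ∑ x : Fin d, ((‖c x‖ ^ 2 : ℝ) : ℂ)
        * (eta d ^ ((p.1 : ℕ) * (x : ℕ)) * (starRingEnd ℂ) (eta d ^ ((q.1 : ℕ) * (x : ℕ)))) with hS
      field_simp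
    · simp [hq]
  · simp [hp]
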